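/- Let A be a unital associative algebra over a field k of characteristic 0 and r ≥ 1. The derived Lie algebra of Mat_{r+1}(A) (with the commutator bracket) equals {X ∈ Mat_{r+1}(A) : trace(X) ∈ [A,A]}, where [A,A] is the k-span of commutators ab − ba in A. -/

import Mathlib

open Matrix

private lemma stdBasisMatrix_sub' {n : Type*} [DecidableEq n] {A : Type*} [Ring A]
    (i j : n) (a b : A) :
    Matrix.single i j (a - b) = Matrix.single i j a - Matrix.single i j b := by
  ext x y
  simp only [Matrix.single, of_apply, Matrix.sub_apply]
  split <;> simp

/-- Let `A` be a unital associative algebra over a field `k` of characteristic 0 and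
`r ≥ 1`.  The derived Lie algebra of `Mat_{r+1}(A)` (the `k`-span of all commutators of
matrices) equals `{X : trace X ∈ [A,A]}`, where `[A,A]` is the `k`-span of the
commutators `ab − ba` in `A`. -/
theorem stmt_15 (k : Type) [Field k] [CharZero k] (A : Type) [Ring A] [Algebra k A]
    (r : ℕ) (hr : 1 ≤ r) :
    (Submodule.span k
        {Z : Matrix (Fin (r + 1)) (Fin (r + 1)) A |
          ∃ X Y : Matrix (Fin (r + 1)) (Fin (r + 1)) A, Z = X * Y - Y * X} :
        Set (Matrix (Fin (r + 1)) (Fin (r + 1)) A))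
      = {X : Matrix (Fin (r + 1)) (Fin (r + 1)) A |
          X.trace ∈ Submodule.span k {z : A | ∃ a b : A, z = a * b - b * a}} := by
  set n := r + 1 with hn
  set T : Submodule k A := Submodule.span k {z : A | ∃ a b : A, z = a * b - b * a} with hT
  set S : Submodule k (Matrix (Fin n) (Fin n) A) :=
    Submodule.span k
      {Z : Matrix (Fin n) (Fin n) A |
        ∃ X Y : Matrix (Fin n) (Fin n) A, Z = X * Y - Y * X} with hS
  -- basic membership lemmas
  have hoff : ∀ (i j : Fin n) (a : A), i ≠ j → Matrix.single i j a ∈ S := by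
    intro i j a hij
    apply Submodule.subset_span
    refine ⟨Matrix.single i j a, Matrix.single j j 1, ?_⟩
    rw [single_mul_single_same, single_mul_single_of_ne (h := Ne.symm hij)]
    simp
  have hdiag : ∀ (i : Fin n) (a : A), i ≠ 0 →
      Matrix.single i i a - Matrix.single 0 0 a ∈ S := by
    intro i a hi
    apply Submodule.subset_span
    refine ⟨Matrix.single i 0 a, Matrix.single 0 i 1, ?_⟩
    rw [single_mul_single_same, single_mul_single_same]
    simp
  have he00 : ∀ a : A, a ∈ T → Matrix.single (0 : Fin n) 0 a ∈ S := by
    intro a ha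
    induction ha using Submodule.span_induction with
    | mem z hz =>
      obtain ⟨a, b, rfl⟩ := hz
      apply Submodule.subset_span
      refine ⟨Matrix.single 0 0 a, Matrix.single 0 0 b, ?_⟩
      rw [single_mul_single_same, single_mul_single_same, stdBasisMatrix_sub']
    | zero => rw [single_zero]; exact S.zero_mem
    | add x y hx hy hx' hy' => rw [single_add]; exact S.add_mem hx' hy'
    | smul c x hx hx' => rw [← smul_single]; exact S.smul_mem c hx'
  ext X
  simp only [SetLike.mem_coe, Set.mem_setOf_eq]
  constructor
  · -- X ∈ S → trace X ∈ T
    intro hX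
    induction hX using Submodule.span_induction with
    | mem Z hZ =>
      obtain ⟨X, Y, rfl⟩ := hZ
      have : (X * Y - Y * X).trace = ∑ i, ∑ j, (X i j * Y j i - Y j i * X i j) := by
        rw [Matrix.trace_sub]
        simp only [Matrix.trace, Matrix.diag, Matrix.mul_apply, Finset.sum_sub_distrib]
        congr 1
        exact Finset.sum_comm
      rw [this]
      exact Submodule.sum_mem _ fun i _ => Submodule.sum_mem _ fun j _ =>
        Submodule.subset_span ⟨X i j, Y j i, rfl⟩
    | zero => simp [Matrix.trace]
    | add x y hx hy hx' hy' => rw [Matrix.trace_add]; exact T.add_mem hx' hy'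
    | smul c x hx hx' => rw [Matrix.trace_smul]; exact T.smul_mem c hx'
  · -- trace X ∈ T → X ∈ S
    intro hX
    set D : Fin n → Fin n → Matrix (Fin n) (Fin n) A := fun i j =>
      if i = j then Matrix.single i i (X i i) - Matrix.single 0 0 (X i i)
      else Matrix.single i j (X i j) with hD
    have hDS : ∀ i j, D i j ∈ S := by
      intro i j
      rw [hD]
      by_cases hij : i = j
      · subst hij
        simp only [if_pos rfl]
        by_cases hi : i = 0
        · subst hi; simp [S.zero_mem]
        · exact hdiag i _ hi
      · simp only [if_neg hij]
        exact hoff i j _ hij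
    have hdecomp : X = (∑ i, ∑ j, D i j) + Matrix.single 0 0 X.trace := by
      have h1 : ∀ i j, D i j = Matrix.single i j (X i j) -
          (if i = j then Matrix.single (0 : Fin n) 0 (X i i) else 0) := by
        intro i j
        rw [hD]
        by_cases hij : i = j
        · subst hij; simp
        · simp [hij]
      have h2 : Matrix.single (0 : Fin n) (0 : Fin n) X.trace =
          ∑ i : Fin n, Matrix.single (0 : Fin n) (0 : Fin n) (X i i) := by
        rw [Matrix.trace]
        exact map_sum (AddMonoidHom.mk' (Matrix.single (0 : Fin n) (0 : Fin n))
          (single_add 0 0)) (fun i => X i i) Finset.univ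
      simp only [h1, Finset.sum_sub_distrib, Finset.sum_ite_eq, Finset.mem_univ, if_pos]
      rw [← matrix_eq_sum_single X]
      simp only [h2]
      abel
    rw [hdecomp]
    exact S.add_mem
      (Submodule.sum_mem _ fun i _ => Submodule.sum_mem _ fun j _ => hDS i j)
      (he00 _ hX)
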